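/- Let I, J be open intervals in ℝ, let f : I → ℝ be C^∞ with f(I) ⊆ J, let r ∈ ℕ ∪ {∞} and g : J → ℝ be of class C^r, and set h := g ∘ f. Let n ∈ ℕ with 1 ≤ n ≤ r, let t ∈ I, and let F, G ∈ ℝ with F ≥ 1 be such that |f^{(k)}(t)| ≤ F for k = 1, …, n and |g^{(m)}(f(t))| ≤ G for m = 1, …, n. Then |h^{(n)}(t)| ≤ G·(nF)^n. -/

import Mathlib

open Real Set

/-- Lemma 2.1 (a bound coming from Faà di Bruno's formula): if `f` is `C^∞` on
an open interval `I` with `f(I) ⊆ J`, `g` is `C^r` on the open interval `J`,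
`h = g ∘ f`, `1 ≤ n ≤ r`, `t ∈ I`, `|f⁽ᵏ⁾(t)| ≤ F` for `1 ≤ k ≤ n` with
`F ≥ 1`, and `|g⁽ᵐ⁾(f(t))| ≤ G` for `1 ≤ m ≤ n`, then
`|h⁽ⁿ⁾(t)| ≤ G·(nF)^n`. -/
theorem faa_di_bruno_composition_bound
    (I J : Set ℝ) (hIopen : IsOpen I) (hIint : I.OrdConnected)
    (hJopen : IsOpen J) (hJint : J.OrdConnected)
    (f g : ℝ → ℝ)
    (hf : ContDiffOn ℝ (⊤ : ℕ∞) f I) (hmaps : MapsTo f I J)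
    (r : ℕ∞) (hg : ContDiffOn ℝ r g J)
    (n : ℕ) (hn : 1 ≤ n) (hnr : (n : ℕ∞) ≤ r)
    (t : ℝ) (ht : t ∈ I)
    (F G : ℝ) (hF : 1 ≤ F)
    (hfb : ∀ k : ℕ, 1 ≤ k → k ≤ n → |iteratedDerivWithin k f I t| ≤ F)
    (hgb : ∀ m : ℕ, 1 ≤ m → m ≤ n → |iteratedDerivWithin m g J (f t)| ≤ G) :
    |iteratedDerivWithin n (g ∘ f) I t| ≤ G * ((n : ℝ) * F) ^ n := by
  have hIu : UniqueDiffOn ℝ I := hIopen.uniqueDiffOn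
  have hJu : UniqueDiffOn ℝ J := hJopen.uniqueDiffOn
  have hG0 : 0 ≤ G := (abs_nonneg _).trans (hgb 1 le_rfl hn)
  set c : ℝ := g (f t) with hc
  set g' : ℝ → ℝ := fun y => -c + g y with hg'
  have hgg' : ContDiffOn ℝ r g' J := contDiffOn_const.add hg
  have key : ‖iteratedFDerivWithin ℝ n (g' ∘ f) I t‖ ≤ ((Nat.factorial n) : ℝ) * G * F ^ n := by
    apply norm_iteratedFDerivWithin_comp_le (N := (r : WithTop ℕ∞)) hgg'
      (hf.of_le (by exact_mod_cast le_top)) (by exact_mod_cast hnr) hJu hIu hmaps ht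
    · intro i hi
      rw [norm_iteratedFDerivWithin_eq_norm_iteratedDerivWithin]
      rcases Nat.eq_zero_or_pos i with h0 | hipos
      · simp [h0, hg', hc, hG0]
      · rw [show iteratedDerivWithin i g' J (f t) = iteratedDerivWithin i g J (f t) from
          iteratedDerivWithin_const_add hipos (-c)]
        exact hgb i hipos hi
    · intro i hi1 hi2
      rw [norm_iteratedFDerivWithin_eq_norm_iteratedDerivWithin]
      exact (hfb i hi1 hi2).trans (le_self_pow₀ hF (Nat.one_le_iff_ne_zero.mp hi1))
  have heq : iteratedDerivWithin n (g' ∘ f) I t = iteratedDerivWithin n (g ∘ f) I t := by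
    have : (g' ∘ f) = fun z => -c + (g ∘ f) z := rfl
    rw [this]
    exact iteratedDerivWithin_const_add hn (-c)
  rw [norm_iteratedFDerivWithin_eq_norm_iteratedDerivWithin, heq, Real.norm_eq_abs] at key
  refine key.trans ?_
  have hfac : ((Nat.factorial n) : ℝ) ≤ (n : ℝ) ^ n := by exact_mod_cast Nat.factorial_le_pow n
  calc ((Nat.factorial n) : ℝ) * G * F ^ n ≤ (n : ℝ) ^ n * G * F ^ n := by
        apply mul_le_mul_of_nonneg_right (mul_le_mul_of_nonneg_right hfac hG0)
        positivity
    _ = G * ((n : ℝ) * F) ^ n := by rw [mul_pow]; ring
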